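/- Let H be a numerical semigroup with 1 ∉ H, k a field, R = k[H] ⊆ S = k[t], and M a maximal ideal of R. Then the following are equivalent: (1) R/M ≅ k; (2) M = (α^{a} − t^{a} : a ∈ H generators) for some α ∈ k; (3) M ⊆ (α − t)S for some α ∈ k. Moreover such α is unique. -/

import Mathlib

open Polynomial

set_option maxHeartbeats 1000000
set_option synthInstance.maxHeartbeats 1000000

section AuxSemigroupRing

variable {k : Type*} [Field k]

private lemma memR {H : AddSubmonoid ℕ} {R : Subalgebra k (Polynomial k)}
    (hRdef : R = Algebra.adjoin k {p : Polynomial k | ∃ h ∈ H, p = (X : Polynomial k) ^ h})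
    {h : ℕ} (hh : h ∈ H) : (X : Polynomial k) ^ h ∈ R := by
  rw [hRdef]; exact Algebra.subset_adjoin ⟨h, hh, rfl⟩

private lemma memC (R : Subalgebra k (Polynomial k)) (c : k) : (C c : Polynomial k) ∈ R :=
  Polynomial.algebraMap_eq (R := k) ▸ R.algebraMap_mem c

private lemma existsN {H : AddSubmonoid ℕ} (hfin : ((H : Set ℕ)ᶜ).Finite) :
    ∃ N : ℕ, 0 < N ∧ ∀ n, N ≤ n → n ∈ H := by
  obtain ⟨b, hb⟩ := hfin.bddAbove
  refine ⟨b + 1, Nat.succ_pos b, fun n hn => ?_⟩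
  by_contra hc
  exact absurd (hb hc) (by omega)

private lemma exists_alpha {H : AddSubmonoid ℕ} (hfin : ((H : Set ℕ)ᶜ).Finite)
    {R : Subalgebra k (Polynomial k)}
    (hRdef : R = Algebra.adjoin k {p : Polynomial k | ∃ h ∈ H, p = (X : Polynomial k) ^ h})
    (φ : ↥R →+* k) :
    ∃ α : k, ∀ h ∈ H, ∀ hp : (X : Polynomial k) ^ h ∈ R, φ ⟨X ^ h, hp⟩ = α ^ h := by
  obtain ⟨N, hN0, hNmem⟩ := existsN hfin
  have hNH : N ∈ H := hNmem N le_rfl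
  have hN1H : N + 1 ∈ H := hNmem (N + 1) (by omega)
  have pow_mem : ∀ (c m : ℕ), m ∈ H → c * m ∈ H := by
    intro c m hm
    induction c with
    | zero => simpa using H.zero_mem
    | succ n ih => simpa [Nat.succ_mul] using H.add_mem ih hm
  have key : ∀ (m c : ℕ) (hm : m ∈ H),
      φ ⟨X ^ (c * m), memR hRdef (pow_mem c m hm)⟩ = (φ ⟨X ^ m, memR hRdef hm⟩) ^ c := by
    intro m c hm
    rw [← map_pow]
    congr 1
    exact Subtype.ext (by push_cast; rw [← pow_mul, mul_comm])
  set u := φ ⟨X ^ N, memR hRdef hNH⟩ with hu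
  by_cases hu0 : u = 0
  · refine ⟨0, fun h hh hp => ?_⟩
    rcases Nat.eq_zero_or_pos h with rfl | hpos
    · have h1 : (⟨X ^ 0, hp⟩ : ↥R) = 1 := Subtype.ext (by simp)
      rw [h1, map_one, pow_zero]
    · have e1 : (φ ⟨X ^ h, memR hRdef hh⟩) ^ N = 0 := by
        rw [← key h N hh]
        have e2 : (⟨X ^ (N * h), memR hRdef (pow_mem N h hh)⟩ : ↥R)
            = ⟨X ^ (h * N), memR hRdef (pow_mem h N hNH)⟩ :=
          Subtype.ext (by show (X : Polynomial k) ^ (N * h) = X ^ (h * N); rw [Nat.mul_comm])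
        rw [e2, key N h hNH, ← hu, hu0, zero_pow hpos.ne']
      have e3 : φ ⟨X ^ h, memR hRdef hh⟩ = 0 :=
        pow_eq_zero_iff hN0.ne' |>.mp e1
      rw [zero_pow hpos.ne']
      exact e3
  · set w := φ ⟨X ^ (N + 1), memR hRdef hN1H⟩ with hw
    refine ⟨w / u, fun h hh hp => ?_⟩
    have e1 : φ ⟨X ^ h, hp⟩ * u ^ h = w ^ h := by
      rw [← key N h hNH, ← map_mul]
      have e2 : (⟨X ^ h, hp⟩ : ↥R) * ⟨X ^ (h * N), memR hRdef (pow_mem h N hNH)⟩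
          = ⟨X ^ (h * (N + 1)), memR hRdef (pow_mem h (N + 1) hN1H)⟩ := by
        apply Subtype.ext
        push_cast
        rw [← pow_add]
        ring_nf
      rw [e2, key (N + 1) h hN1H]
    rw [div_pow, eq_div_iff (pow_ne_zero _ hu0)]
    exact e1

private lemma phi_eq_eval {H : AddSubmonoid ℕ}
    {R : Subalgebra k (Polynomial k)}
    (hRdef : R = Algebra.adjoin k {p : Polynomial k | ∃ h ∈ H, p = (X : Polynomial k) ^ h})
    (φ : ↥R →ₐ[k] k) {α : k}
    (hα : ∀ h ∈ H, ∀ hp : (X : Polynomial k) ^ h ∈ R, φ ⟨X ^ h, hp⟩ = α ^ h) :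
    ∀ x : ↥R, φ x = eval α (x : Polynomial k) := by
  set ψ : ↥R →ₐ[k] k := (Polynomial.aeval α).comp R.val with hψ
  have hle : Algebra.adjoin k {p : Polynomial k | ∃ h ∈ H, p = (X : Polynomial k) ^ h}
      ≤ (AlgHom.equalizer φ ψ).map R.val := by
    apply Algebra.adjoin_le
    rintro p ⟨h, hh, rfl⟩
    refine ⟨⟨X ^ h, memR hRdef hh⟩, ?_, rfl⟩
    show φ ⟨X ^ h, memR hRdef hh⟩ = ψ ⟨X ^ h, memR hRdef hh⟩
    rw [hα h hh]
    simp [hψ]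
  rw [← hRdef] at hle
  intro x
  obtain ⟨y, hy, hxy⟩ := Subalgebra.mem_map.mp (hle x.2)
  have hyx : y = x := Subtype.ext hxy
  rw [← hyx]
  have h2 := (AlgHom.mem_equalizer φ ψ y).mp hy
  rw [h2, hψ]
  simp [Polynomial.coe_aeval_eq_eval]

/-- from a divisibility bound on `M`, the quotient is `k`. -/
private lemma three_to_one {R : Subalgebra k (Polynomial k)}
    (M : Ideal ↥R) (hM : M.IsMaximal) (α : k)
    (hsub : ∀ x ∈ M, (x : Polynomial k) ∈ Ideal.span {C α - (X : Polynomial k)}) :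
    Function.Bijective (algebraMap k (↥R ⧸ M)) := by
  set φ : ↥R →+* k := (Polynomial.evalRingHom α).comp R.subtype with hφ
  have hφval : ∀ x : ↥R, φ x = eval α (x : Polynomial k) := fun x => rfl
  have hφc : ∀ c : k, φ (algebraMap k ↥R c) = c := by
    intro c
    rw [hφval]
    have : ((algebraMap k ↥R c : ↥R) : Polynomial k) = C c := by
      simp [Polynomial.algebraMap_eq]
    rw [this, eval_C]
  have hMker : ∀ x ∈ M, φ x = 0 := by
    intro x hx
    have hd := Ideal.mem_span_singleton.mp (hsub x hx)
    have hd' : (X : Polynomial k) - C α ∣ (x : Polynomial k) := by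
      rw [← neg_sub]; exact hd.neg_left
    exact Polynomial.dvd_iff_isRoot.mp hd'
  have hker : M = RingHom.ker φ := by
    refine hM.eq_of_le ?_ (fun x hx => hMker x hx)
    intro ht
    have h1 : (1 : ↥R) ∈ RingHom.ker φ := ht ▸ trivial
    rw [RingHom.mem_ker, map_one] at h1
    exact one_ne_zero h1
  have hmkalg : ∀ c : k, Ideal.Quotient.mk M (algebraMap k ↥R c) = algebraMap k (↥R ⧸ M) c := by
    intro c
    rw [← Ideal.Quotient.mkₐ_eq_mk k M]; exact (Ideal.Quotient.mkₐ k M).commutes c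
  constructor
  · intro c d hcd
    have : algebraMap k ↥R c - algebraMap k ↥R d ∈ M := by
      rw [← Ideal.Quotient.eq_zero_iff_mem, map_sub, hmkalg, hmkalg, hcd, sub_self]
    have h0 := hMker _ this
    rw [map_sub, hφc, hφc, sub_eq_zero] at h0
    exact h0
  · intro y
    obtain ⟨x, rfl⟩ := Ideal.Quotient.mk_surjective y
    refine ⟨φ x, ?_⟩
    rw [← hmkalg, Ideal.Quotient.mk_eq_mk_iff_sub_mem, hker, RingHom.mem_ker, map_sub, hφc,
      sub_self]

/-- the quotient characterization coming from bijectivity. -/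
private lemma one_data {H : AddSubmonoid ℕ} (hfin : ((H : Set ℕ)ᶜ).Finite)
    {R : Subalgebra k (Polynomial k)}
    (hRdef : R = Algebra.adjoin k {p : Polynomial k | ∃ h ∈ H, p = (X : Polynomial k) ^ h})
    (M : Ideal ↥R)
    (hbij : Function.Bijective (algebraMap k (↥R ⧸ M))) :
    ∃ α : k, ∀ x : ↥R, x ∈ M ↔ eval α (x : Polynomial k) = 0 := by
  set e : k ≃+* (↥R ⧸ M) := RingEquiv.ofBijective (algebraMap k (↥R ⧸ M)) hbij with he
  set φ₀ : ↥R →+* k := e.symm.toRingHom.comp (Ideal.Quotient.mk M) with hφ₀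
  have hmkalg : ∀ c : k, Ideal.Quotient.mk M (algebraMap k ↥R c) = algebraMap k (↥R ⧸ M) c := by
    intro c
    rw [← Ideal.Quotient.mkₐ_eq_mk k M]; exact (Ideal.Quotient.mkₐ k M).commutes c
  have hc : ∀ c : k, φ₀ (algebraMap k ↥R c) = c := by
    intro c
    show e.symm (Ideal.Quotient.mk M (algebraMap k ↥R c)) = c
    rw [hmkalg]
    exact e.symm_apply_apply c
  set φ : ↥R →ₐ[k] k := { toRingHom := φ₀, commutes' := hc } with hφ
  obtain ⟨α, hα⟩ := exists_alpha hfin hRdef φ₀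
  have heval := phi_eq_eval hRdef φ hα
  refine ⟨α, fun x => ?_⟩
  have hφx : φ₀ x = eval α (x : Polynomial k) := heval x
  rw [← hφx]
  constructor
  · intro hx
    show e.symm (Ideal.Quotient.mk M x) = 0
    rw [Ideal.Quotient.eq_zero_iff_mem.mpr hx, map_zero]
  · intro hx
    have : e.symm (Ideal.Quotient.mk M x) = e.symm 0 := by rw [map_zero]; exact hx
    have h0 := e.symm.injective this
    exact Ideal.Quotient.eq_zero_iff_mem.mp h0

/-- surjectivity of the structure map onto the quotient, given that each generator is
congruent to a constant. -/
private lemma surj_aux {H : AddSubmonoid ℕ} {v : ℕ} {a : Fin v → ℕ}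
    (ha : AddSubmonoid.closure (Set.range a) = H)
    {R : Subalgebra k (Polynomial k)}
    (hRdef : R = Algebra.adjoin k {p : Polynomial k | ∃ h ∈ H, p = (X : Polynomial k) ^ h})
    (J : Ideal ↥R)
    (hgen : ∀ (i : Fin v) (hp : (X : Polynomial k) ^ (a i) ∈ R),
      Ideal.Quotient.mk J ⟨X ^ (a i), hp⟩ ∈ Set.range (algebraMap k (↥R ⧸ J))) :
    Function.Surjective (algebraMap k (↥R ⧸ J)) := by
  have step1 : ∀ h ∈ H, ((X : Polynomial k) ^ h ∈ R) ∧
      ∀ hp : (X : Polynomial k) ^ h ∈ R,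
        Ideal.Quotient.mk J ⟨X ^ h, hp⟩ ∈ Set.range (algebraMap k (↥R ⧸ J)) := by
    intro h hh
    rw [← ha] at hh
    induction hh using AddSubmonoid.closure_induction with
    | mem n hn =>
      obtain ⟨i, rfl⟩ := hn
      have hai : a i ∈ H := ha ▸ AddSubmonoid.subset_closure ⟨i, rfl⟩
      exact ⟨memR hRdef hai, fun hp => hgen i hp⟩
    | zero =>
      refine ⟨by simpa using R.one_mem, fun hp => ?_⟩
      have h1 : (⟨X ^ 0, hp⟩ : ↥R) = 1 := Subtype.ext (by simp)
      rw [h1, map_one]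
      exact ⟨1, map_one _⟩
    | add m n hm hn pm pn =>
      have hmemmn : (X : Polynomial k) ^ (m + n) ∈ R := by
        rw [pow_add]; exact R.mul_mem pm.1 pn.1
      refine ⟨hmemmn, fun hp => ?_⟩
      have hsplit : (⟨X ^ (m + n), hp⟩ : ↥R) = ⟨X ^ m, pm.1⟩ * ⟨X ^ n, pn.1⟩ :=
        Subtype.ext (by push_cast; rw [pow_add])
      rw [hsplit, map_mul]
      obtain ⟨c, hc⟩ := pm.2 pm.1
      obtain ⟨d, hd⟩ := pn.2 pn.1
      exact ⟨c * d, by rw [map_mul, hc, hd]⟩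
  set E : Subalgebra k ↥R := Subalgebra.comap (Ideal.Quotient.mkₐ k J) ⊥ with hE
  have hle : Algebra.adjoin k {p : Polynomial k | ∃ h ∈ H, p = (X : Polynomial k) ^ h}
      ≤ E.map R.val := by
    apply Algebra.adjoin_le
    rintro p ⟨h, hh, rfl⟩
    refine ⟨⟨X ^ h, memR hRdef hh⟩, ?_, rfl⟩
    show (Ideal.Quotient.mkₐ k J) ⟨X ^ h, memR hRdef hh⟩ ∈ (⊥ : Subalgebra k (↥R ⧸ J))
    rw [Algebra.mem_bot]
    have := (step1 h hh).2 (memR hRdef hh)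
    simpa [Ideal.Quotient.mkₐ_eq_mk] using this
  rw [← hRdef] at hle
  intro y
  obtain ⟨x, rfl⟩ := Ideal.Quotient.mk_surjective y
  obtain ⟨z, hz, hzx⟩ := Subalgebra.mem_map.mp (hle x.2)
  have hzx' : z = x := Subtype.ext hzx
  rw [hE, Subalgebra.mem_comap, Algebra.mem_bot] at hz
  obtain ⟨c, hc⟩ := hz
  refine ⟨c, ?_⟩
  rw [hc, Ideal.Quotient.mkₐ_eq_mk, hzx']

end AuxSemigroupRing

/-- for a numerical semigroup `H = ⟨a₁,…,a_v⟩` with `1 ∉ H` and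
`R = k[H]`, a maximal ideal `M` of `R` is `k`-rational iff
`M = (α^{aᵢ} − t^{aᵢ} : 1 ≤ i ≤ v)` for some `α ∈ k`, iff `M ⊆ (α − t)S` for some
`α ∈ k`; moreover such an `α` is unique. -/
theorem rational_points_of_semigroup_ring
    (k : Type*) [Field k] (H : AddSubmonoid ℕ) (hfin : ((H : Set ℕ)ᶜ).Finite)
    (h1 : (1 : ℕ) ∉ H)
    (v : ℕ) (a : Fin v → ℕ) (ha : AddSubmonoid.closure (Set.range a) = H)
    (R : Subalgebra k (Polynomial k))
    (hRdef : R = Algebra.adjoin k {p : Polynomial k | ∃ h ∈ H, p = (X : Polynomial k) ^ h})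
    (M : Ideal R) (hM : M.IsMaximal) :
    ((Function.Bijective (algebraMap k (R ⧸ M)) ↔
        ∃ α : k, M = Ideal.span {x : R | ∃ i : Fin v,
          (x : Polynomial k) = C (α ^ (a i)) - X ^ (a i)}) ∧
      (Function.Bijective (algebraMap k (R ⧸ M)) ↔
        ∃ α : k, ∀ x ∈ M, (x : Polynomial k) ∈ Ideal.span {C α - (X : Polynomial k)})) ∧
      ∀ α β : k, (∀ x ∈ M, (x : Polynomial k) ∈ Ideal.span {C α - (X : Polynomial k)}) →
        (∀ x ∈ M, (x : Polynomial k) ∈ Ideal.span {C β - (X : Polynomial k)}) →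
          α = β := by
  have haiH : ∀ i : Fin v, a i ∈ H := fun i => ha ▸ AddSubmonoid.subset_closure ⟨i, rfl⟩
  -- (1) → (3) data
  have h13 : Function.Bijective (algebraMap k (R ⧸ M)) →
      ∃ α : k, ∀ x ∈ M, (x : Polynomial k) ∈ Ideal.span {C α - (X : Polynomial k)} := by
    intro hbij
    obtain ⟨α, hchar⟩ := one_data hfin hRdef M hbij
    refine ⟨α, fun x hx => ?_⟩
    rw [Ideal.mem_span_singleton, ← neg_sub, neg_dvd]
    exact Polynomial.dvd_iff_isRoot.mpr ((hchar x).mp hx)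
  -- (1) → (2)
  have h12 : Function.Bijective (algebraMap k (R ⧸ M)) →
      ∃ α : k, M = Ideal.span {x : R | ∃ i : Fin v,
        (x : Polynomial k) = C (α ^ (a i)) - X ^ (a i)} := by
    intro hbij
    obtain ⟨α, hchar⟩ := one_data hfin hRdef M hbij
    set S : Set ↥R := {x : ↥R | ∃ i : Fin v,
      (x : Polynomial k) = C (α ^ (a i)) - X ^ (a i)} with hS
    set J : Ideal ↥R := Ideal.span S with hJ
    have hJM : J ≤ M := by
      rw [hJ, Ideal.span_le]
      rintro x ⟨i, hxi⟩
      apply (hchar x).mpr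
      rw [hxi]
      simp
    have hsurj : Function.Surjective (algebraMap k (↥R ⧸ J)) := by
      apply surj_aux ha hRdef
      intro i hp
      refine ⟨α ^ (a i), ?_⟩
      have hmkalg : Ideal.Quotient.mk J (algebraMap k ↥R (α ^ (a i)))
          = algebraMap k (↥R ⧸ J) (α ^ (a i)) := by
        rw [← Ideal.Quotient.mkₐ_eq_mk k J]; exact (Ideal.Quotient.mkₐ k J).commutes _
      rw [← hmkalg, Ideal.Quotient.mk_eq_mk_iff_sub_mem]
      apply Ideal.subset_span
      refine ⟨i, ?_⟩
      push_cast
      simp [Polynomial.algebraMap_eq]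
    refine ⟨α, le_antisymm ?_ hJM⟩
    intro x hx
    obtain ⟨c, hc⟩ := hsurj (Ideal.Quotient.mk J x)
    have hfac := Ideal.Quotient.factor_mk hJM
    have h0 : algebraMap k (R ⧸ M) c = 0 := by
      have e1 : Ideal.Quotient.factor hJM (algebraMap k (↥R ⧸ J) c)
          = algebraMap k (R ⧸ M) c := by
        have hmkJ : algebraMap k (↥R ⧸ J) c = Ideal.Quotient.mk J (algebraMap k ↥R c) := by
          rw [← Ideal.Quotient.mkₐ_eq_mk k J]; exact ((Ideal.Quotient.mkₐ k J).commutes c).symm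
        have hmkM : Ideal.Quotient.mk M (algebraMap k ↥R c) = algebraMap k (R ⧸ M) c := by
          rw [← Ideal.Quotient.mkₐ_eq_mk k M]; exact (Ideal.Quotient.mkₐ k M).commutes c
        rw [hmkJ, hfac, hmkM]
      rw [← e1, hc, hfac, Ideal.Quotient.eq_zero_iff_mem.mpr hx]
    have hc0 : c = 0 := by
      apply hbij.1
      rw [h0, map_zero]
    rw [hc0, map_zero] at hc
    exact Ideal.Quotient.eq_zero_iff_mem.mp hc.symm
  -- (2) → (3)
  have h23 : (∃ α : k, M = Ideal.span {x : R | ∃ i : Fin v,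
        (x : Polynomial k) = C (α ^ (a i)) - X ^ (a i)}) →
      ∃ α : k, ∀ x ∈ M, (x : Polynomial k) ∈ Ideal.span {C α - (X : Polynomial k)} := by
    rintro ⟨α, hMeq⟩
    refine ⟨α, ?_⟩
    have : M ≤ Ideal.comap (R.subtype) (Ideal.span {C α - (X : Polynomial k)}) := by
      rw [hMeq, Ideal.span_le]
      rintro x ⟨i, hxi⟩
      rw [SetLike.mem_coe, Ideal.mem_comap]
      show (x : Polynomial k) ∈ _
      rw [hxi, Ideal.mem_span_singleton, ← neg_sub, neg_dvd]
      apply Polynomial.dvd_iff_isRoot.mpr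
      simp [Polynomial.IsRoot]
    intro x hx
    exact Ideal.mem_comap.mp (this hx)
  -- (3) → (1)
  have h31 : (∃ α : k, ∀ x ∈ M, (x : Polynomial k) ∈ Ideal.span {C α - (X : Polynomial k)}) →
      Function.Bijective (algebraMap k (R ⧸ M)) := by
    rintro ⟨α, hα⟩
    exact three_to_one M hM α hα
  refine ⟨⟨⟨h12, fun h2 => h31 (h23 h2)⟩, ⟨h13, h31⟩⟩, ?_⟩
  -- uniqueness
  intro α β hsα hsβ
  obtain ⟨N, hN0, hNmem⟩ := existsN hfin
  have hNH : N ∈ H := hNmem N le_rfl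
  have hN1H : N + 1 ∈ H := hNmem (N + 1) (by omega)
  -- M equals the kernel of evaluation at α
  have hker : ∀ (γ : k), (∀ x ∈ M, (x : Polynomial k) ∈ Ideal.span {C γ - (X : Polynomial k)}) →
      ∀ x : ↥R, x ∈ M ↔ eval γ (x : Polynomial k) = 0 := by
    intro γ hs
    set φ : ↥R →+* k := (Polynomial.evalRingHom γ).comp R.subtype with hφ
    have hMker : M ≤ RingHom.ker φ := by
      intro x hx
      have hd := Ideal.mem_span_singleton.mp (hs x hx)
      have hd' : (X : Polynomial k) - C γ ∣ (x : Polynomial k) := by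
        rw [← neg_sub]; exact hd.neg_left
      exact Polynomial.dvd_iff_isRoot.mp hd'
    have heq : M = RingHom.ker φ := by
      refine hM.eq_of_le ?_ hMker
      intro ht
      have h1' : (1 : ↥R) ∈ RingHom.ker φ := ht ▸ trivial
      rw [RingHom.mem_ker, map_one] at h1'
      exact one_ne_zero h1'
    intro x
    rw [heq, RingHom.mem_ker]
    rfl
  have hev : ∀ (m : ℕ), m ∈ H → β ^ m = α ^ m := by
    intro m hm
    have hmem : (X : Polynomial k) ^ m - C (α ^ m) ∈ R :=
      R.sub_mem (memR hRdef hm) (memC R (α ^ m))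
    have hxM : (⟨X ^ m - C (α ^ m), hmem⟩ : ↥R) ∈ M := by
      rw [hker α hsα]
      simp
    have h3 : eval β ((X : Polynomial k) ^ m - C (α ^ m)) = 0 := (hker β hsβ _).mp hxM
    simpa [sub_eq_zero] using h3
  have hN := hev N hNH
  have hN1 := hev (N + 1) hN1H
  rcases eq_or_ne α 0 with rfl | hα0
  · have hb0 : β ^ N = 0 := by simpa [zero_pow hN0.ne'] using hN
    exact ((pow_eq_zero_iff hN0.ne').mp hb0).symm
  · have h2 : β * α ^ N = α * α ^ N := by
      calc β * α ^ N = β ^ (N + 1) := by rw [← hN]; ring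
        _ = α ^ (N + 1) := hN1
        _ = α * α ^ N := by ring
    exact (mul_right_cancel₀ (pow_ne_zero N hα0) h2).symm
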